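/- Let γ = exp(Σ_{i=1}^N (Log x_i)^2/(2 Log q)) regarded as a multiplication operator, and let M_{a,k} be the type A difference operators M_{a,k} = Σ_{|I|=a} (Π_{i∈I} x_i)^k Π_{i∈I,j∉I} x_i/(x_i−x_j) Π_{i∈I} Γ_i. Then γ^{−1} ∘ Γ_i ∘ γ = q^{1/2} x_i Γ_i for each i, and consequently M_{a,k} = q^{−ak/2} γ^{−k} ∘ M_{a,0} ∘ γ^{k} for all a ∈ {1,...,N} and k ∈ ℤ. -/

import Mathlib

noncomputable section

/-- The generic type `A` difference operator
`M_{a,k} = Σ_{|I|=a} (Π_{i∈I} x_i)^k Π_{i∈I,j∉I} x_i/(x_i−x_j) Π_{i∈I} Γ_i`,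
acting on a field `L` of functions of `x_1,…,x_N`, where `Γ v = ∏_i Γ_i^{v_i}` denotes the
`q`-shift operators (`Γ_i : x_i ↦ q x_i`). -/
def MAgen {L : Type*} [Field L] (N : ℕ) (x : Fin N → L) (Γ : (Fin N → ℤ) → L ≃+* L)
    (a : ℕ) (k : ℤ) : L → L := fun f =>
  ∑ I ∈ Finset.powersetCard a (Finset.univ : Finset (Fin N)),
    (∏ i ∈ I, x i) ^ k *
      ((∏ i ∈ I, ∏ j ∈ Iᶜ, x i / (x i - x j)) * Γ (fun i => if i ∈ I then 1 else 0) f)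

/-- let `γ = exp(Σ_i (Log x_i)²/(2 Log q))` be the Gaussian, i.e. any invertible
function satisfying `Γ v γ = (∏_i q^{v_i²/2} x_i^{v_i}) γ` (with `s = q^{1/2}`).  Then
conjugation by `γ` satisfies `γ⁻¹ ∘ Γ_i ∘ γ = q^{1/2} x_i Γ_i`, and consequently
`M_{a,k} = q^{−ak/2} γ^{−k} ∘ M_{a,0} ∘ γ^{k}` for all `a ∈ {1,…,N}` and `k ∈ ℤ`. -/
theorem stmt2 {L : Type*} [Field L] (N : ℕ) (q s : L) (hs : s ^ 2 = q) (hs0 : s ≠ 0)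
    (x : Fin N → L) (Γ : (Fin N → ℤ) → L ≃+* L)
    (hΓx : ∀ (v : Fin N → ℤ) (i : Fin N), Γ v (x i) = q ^ v i * x i)
    (γ : L) (hγ0 : γ ≠ 0)
    (hγ : ∀ v : Fin N → ℤ, Γ v γ = (∏ i, s ^ (v i ^ 2) * x i ^ v i) * γ) :
    (∀ (i : Fin N) (f : L),
        γ⁻¹ * Γ (fun j => if j = i then 1 else 0) (γ * f) =
          s * x i * Γ (fun j => if j = i then 1 else 0) f) ∧
    (∀ a : ℕ, 1 ≤ a → a ≤ N → ∀ k : ℤ,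
      MAgen N x Γ a k = fun f =>
        s ^ (-((a : ℤ) * k)) * (γ ^ (-k) * MAgen N x Γ a 0 (γ ^ k * f))) := by
  constructor
  · intro i f
    rw [map_mul, hγ]
    have hp : (∏ j, s ^ ((if j = i then (1:ℤ) else 0) ^ 2) *
        x j ^ (if j = i then (1:ℤ) else 0)) = s * x i := by
      rw [Finset.prod_eq_single i]
      · simp
      · intro j _ hj; simp [hj]
      · simp
    rw [hp]
    field_simp
  · intro a ha haN k
    funext f
    unfold MAgen
    rw [Finset.mul_sum, Finset.mul_sum]
    apply Finset.sum_congr rfl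
    intro I hI
    have hcard : I.card = a := (Finset.mem_powersetCard.mp hI).2
    set v : Fin N → ℤ := fun i => if i ∈ I then 1 else 0 with hv
    have hΓγ : Γ v γ = s ^ (a : ℤ) * (∏ i ∈ I, x i) * γ := by
      rw [hγ]
      congr 1
      have h1 : (∏ i, s ^ (v i ^ 2) * x i ^ v i) = ∏ i ∈ I, (s * x i) := by
        rw [← Finset.prod_subset I.subset_univ (fun i _ hi => by simp [hv, hi])]
        exact Finset.prod_congr rfl (fun i hi => by simp [hv, hi])
      rw [h1, Finset.prod_mul_distrib, Finset.prod_const, hcard, ← zpow_natCast s a]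
    have hmap : Γ v (γ ^ k * f) = (s ^ (a : ℤ) * (∏ i ∈ I, x i) * γ) ^ k * Γ v f := by
      rw [map_mul, map_zpow₀, hΓγ]
    rw [hmap]
    have hsk : s ^ ((a : ℤ) * k) ≠ 0 := zpow_ne_zero _ hs0
    have hγk : γ ^ k ≠ 0 := zpow_ne_zero _ hγ0
    rw [mul_zpow, mul_zpow, ← zpow_mul]
    field_simp
    have e1 : s ^ (-((a : ℤ) * k)) * s ^ ((a : ℤ) * k) = 1 := by
      rw [zpow_neg]; exact inv_mul_cancel₀ hsk
    have e2 : γ ^ (-k) * γ ^ k = 1 := by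
      rw [zpow_neg]; exact inv_mul_cancel₀ hγk
    linear_combination (-(((∏ i ∈ I, x i) ^ k * ∏ i ∈ I, ∏ j ∈ Iᶜ, x i / (x i - x j)) * Γ v f
      * γ ^ (-k) * γ ^ k)) * e1 - (((∏ i ∈ I, x i) ^ k * ∏ i ∈ I, ∏ j ∈ Iᶜ, x i / (x i - x j))
      * Γ v f) * e2
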